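/- Let G be a finite connected simple graph, T a spanning tree of G rooted at a vertex r, and let {u, v} be an edge of T with u the parent of v (u lies on the path in T from r to v). If the edge {u, v} lies on some simple cycle of G, then there exists an edge {a, b} of G not belonging to T with a a descendant of v in T and b not a descendant of v in T. -/

import Mathlib

/-- In a tree `T` rooted at `r`, vertex `v` is an ancestor of `u` (equivalently,
`u` is a descendant of `v`) if `v` lies on the unique path in `T` from `r` to `u`.
Every vertex is an ancestor/descendant of itself. -/
def SimpleGraph.IsAncestor {V : Type*} (T : SimpleGraph V) (r v u : V) : Prop :=
  ∀ p : T.Walk r u, p.IsPath → v ∈ p.support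

namespace CrossEdgeAux

open SimpleGraph Walk

variable {V : Type*}

/-- A path with an extra edge at the end whose endpoint is fresh is a path. -/
lemma isPath_concat {H : SimpleGraph V} {x a b : V} {p : H.Walk x a}
    (hp : p.IsPath) (h : H.Adj a b) (hb : b ∉ p.support) : (p.concat h).IsPath := by
  rw [← isPath_reverse_iff, reverse_concat, cons_isPath_iff]
  refine ⟨hp.reverse, ?_⟩
  rwa [support_reverse, List.mem_reverse]

/-- Dichotomy for adjacent vertices in a tree: one of the root-paths extends the other. -/
lemma tree_dichot {T : SimpleGraph V} (hT : T.IsTree) {r a b : V} (h : T.Adj a b)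
    (pa : T.Walk r a) (pb : T.Walk r b) (hpa : pa.IsPath) (hpb : pb.IsPath) :
    pa = pb.concat h.symm ∨ pb = pa.concat h := by
  classical
  by_cases hb : b ∈ pa.support
  · left
    have h1 : pa.takeUntil b hb = pb :=
      ((hT.existsUnique_path r b).unique (hpa.takeUntil hb) hpb)
    have hedge : (Walk.cons h.symm Walk.nil : T.Walk b a).IsPath := by
      rw [cons_isPath_iff]
      exact ⟨Walk.IsPath.nil, by simpa using h.ne'⟩
    have h2 : pa.dropUntil b hb = Walk.cons h.symm Walk.nil :=
      ((hT.existsUnique_path b a).unique (hpa.dropUntil hb) hedge)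
    rw [concat_eq_append, ← h1, ← h2, take_spec]
  · right
    exact (hT.existsUnique_path r b).unique hpb (isPath_concat hpa h hb)

/-- On a walk from outside a set into a set, some edge crosses into the set. -/
lemma walk_cross {H : SimpleGraph V} (S : V → Prop) :
    ∀ {x y : V} (p : H.Walk x y), ¬ S x → S y →
      ∃ a b : V, H.Adj b a ∧ s(b, a) ∈ p.edges ∧ S a ∧ ¬ S b := by
  intro x y p
  induction p with
  | nil => intro hx hy; exact absurd hy hx
  | @cons x x' y h q ih =>
    intro hx hy
    by_cases hx' : S x'
    · exact ⟨x', x, h, by simp, hx', hx⟩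
    · obtain ⟨a, b, hab, he, ha, hb⟩ := ih hx' hy
      exact ⟨a, b, hab, by simp [he], ha, hb⟩

end CrossEdgeAux

/-- Let `T` be a spanning tree of a finite connected simple
graph `G`, rooted at `r`, and let `{u, v}` be an edge of `T` with `u` the parent
of `v` (i.e. `u` lies on the `T`-path from `r` to `v`).  If the edge `{u, v}`
lies on some simple cycle of `G`, then there is an edge `{a, b}` of `G` not in
`T` with `a` a descendant of `v` and `b` not a descendant of `v`. -/
theorem cycle_tree_edge_has_spanning_cross_edge {V : Type*} [Fintype V]
    (G T : SimpleGraph V) (hG : G.Connected) (hTG : T ≤ G) (hT : T.IsTree)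
    (r u v : V) (huv : T.Adj u v) (hparent : T.IsAncestor r u v)
    (hcyc : ∃ (x : V) (c : G.Walk x x), c.IsCycle ∧ s(u, v) ∈ c.edges) :
    ∃ a b : V, G.Adj a b ∧ ¬ T.Adj a b ∧
      T.IsAncestor r v a ∧ ¬ T.IsAncestor r v b := by
  classical
  open SimpleGraph Walk CrossEdgeAux in
  -- canonical root paths
  have hpath : ∀ x : V, ∃ p : T.Walk r x, p.IsPath := fun x =>
    (hT.existsUnique_path r x).exists
  set P : ∀ x : V, T.Walk r x := fun x => (hpath x).choose with hP
  have hPpath : ∀ x, (P x).IsPath := fun x => (hpath x).choose_spec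
  have hPuniq : ∀ (x : V) (q : T.Walk r x), q.IsPath → q = P x := fun x q hq =>
    ((hT.existsUnique_path r x).unique hq (hPpath x))
  -- descendant predicate
  set S : V → Prop := fun x => v ∈ (P x).support with hS
  have hSiff : ∀ x, T.IsAncestor r v x ↔ S x := by
    intro x
    constructor
    · intro h; exact h (P x) (hPpath x)
    · intro h q hq; rwa [hPuniq x q hq]
  -- the root path to v goes through u and ends with edge u-v
  have hPv : P v = (P u).concat huv := by
    rcases tree_dichot hT huv (P u) (P v) (hPpath u) (hPpath v) with h | h
    · exfalso
      have hu : u ∈ (P v).support := hparent (P v) (hPpath v)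
      have := (hPpath u).support_nodup
      rw [h, SimpleGraph.Walk.support_concat] at this
      have := List.disjoint_of_nodup_append (by simpa using this)
      exact this hu (by simp)
    · exact h
  have hSv : S v := by simp [hS]
  have hSu : ¬ S u := by
    intro hvu
    have := (hPpath v).support_nodup
    rw [hPv, SimpleGraph.Walk.support_concat] at this
    have := List.disjoint_of_nodup_append (by simpa using this)
    exact this hvu (by simp)
  -- key: any tree edge crossing the boundary of S is {u, v}
  have hcross : ∀ a b : V, T.Adj a b → S a → ¬ S b → s(a, b) = s(u, v) := by
    intro a b hab ha hb
    rcases tree_dichot hT hab (P a) (P b) (hPpath a) (hPpath b) with h | h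
    · -- P a = (P b).concat: then v = a since v ∈ P a, v ∉ P b
      have hva : v = a := by
        have : v ∈ (P a).support := ha
        rw [h, SimpleGraph.Walk.support_concat,
          List.mem_append] at this
        rcases this with h' | h'
        · exact absurd h' hb
        · simpa using h'
      subst hva
      -- P v = (P b).concat hab.symm and P v = (P u).concat huv, so b = u
      have h2 : (P b).concat hab.symm = (P u).concat huv := by rw [← h, hPv]
      have hb_u : b = u := by
        have h3 := congrArg SimpleGraph.Walk.reverse h2
        rw [SimpleGraph.Walk.reverse_concat, SimpleGraph.Walk.reverse_concat] at h3
        injection h3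
      subst hb_u
      exact Sym2.eq_swap
    · -- P b = (P a).concat: then v ∈ P a ⊆ P b, contradiction
      exfalso
      apply hb
      rw [hS]
      show v ∈ (P b).support
      rw [h, SimpleGraph.Walk.support_concat, List.mem_append]
      exact Or.inl ha
  -- the edge {u,v} is on a cycle, hence not a bridge: get a walk u→v avoiding it
  obtain ⟨x, c, hc, he⟩ := hcyc
  have hnb : ¬ G.IsBridge s(u, v) := by
    rw [SimpleGraph.isBridge_iff_adj_and_forall_cycle_notMem (G.mem_edgeSet.mpr (hTG huv))]
    push_neg
    exact ⟨x, c, hc, he⟩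
  rw [SimpleGraph.isBridge_iff_adj_and_forall_walk_mem_edges] at hnb
  push_neg at hnb
  obtain ⟨p, hp⟩ := hnb
  -- find a crossing edge on p (from u, not in S, to v, in S)
  obtain ⟨a, b, hab, hepe, ha, hb⟩ := walk_cross S p hSu hSv
  refine ⟨a, b, hab.symm, ?_, (hSiff a).mpr ha, fun h => hb ((hSiff b).mp h)⟩
  intro hT_ab
  have := hcross a b hT_ab ha hb
  apply hp
  rw [← this, Sym2.eq_swap]
  exact hepe
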